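/- Let w ∈ ℂ^d and let I = {f ∈ ℂ[x_1,…,x_d] : f(w_1^j,…,w_d^j) = 0 for all j ∈ ℕ}. If f is a nonzero polynomial in I whose monomial support is minimal (no nonzero element of I has monomial support strictly contained in that of f), then f is a constant multiple of a monomial or of a binomial (difference of two monomials). -/
import Mathlib
open MvPolynomial

lemma vand_aux {n : ℕ} (vv : Fin n → ℂ) (hvv : Function.Injective vv)
    (u : Fin n → ℂ) (h : ∀ j : ℕ, 0 < j → ∑ i, u i * vv i ^ j = 0) :
    ∀ i, u i * vv i = 0 := by
  have hdet : (Matrix.vandermonde vv).det ≠ 0 :=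
    (Matrix.det_vandermonde_ne_zero_iff).mpr hvv
  have h0 : (fun i => u i * vv i) = 0 := by
    apply Matrix.eq_zero_of_vecMul_eq_zero hdet
    ext j
    have := h (j + 1) (Nat.succ_pos j)
    simp only [Matrix.vecMul, Matrix.vandermonde, dotProduct, Matrix.of_apply,
      Pi.zero_apply]
    rw [← this]
    apply Finset.sum_congr rfl
    intro i _
    ring
  intro i; exact congrFun h0 i

lemma class_sum_zero (V : Finset ℂ) (S : ℂ → ℂ)
    (h : ∀ j : ℕ, 0 < j → ∑ v ∈ V, S v * v ^ j = 0) :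
    ∀ v ∈ V, v ≠ 0 → S v = 0 := by
  intro v hv hv0
  set e := V.equivFin.symm with he
  set vv : Fin V.card → ℂ := fun i => (e i : ℂ) with hvvdef
  have hvv : Function.Injective vv := fun a b hab => e.injective (Subtype.ext hab)
  have key : ∀ i, S (vv i) * vv i = 0 := by
    apply vand_aux vv hvv
    intro j hj
    have : ∑ i, S (vv i) * vv i ^ j = ∑ x : V, S (x : ℂ) * (x : ℂ) ^ j :=
      Equiv.sum_comp e (fun x : V => S (x : ℂ) * (x : ℂ) ^ j)
    rw [this, Finset.sum_coe_sort V (fun v => S v * v ^ j)]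
    exact h j hj
  have := key (e.symm ⟨v, hv⟩)
  simp only [hvvdef, Equiv.apply_symm_apply] at this
  exact (mul_eq_zero.mp this).resolve_right hv0

theorem stmt18 (d : ℕ) (w : Fin d → ℂ)
    (I : Set (MvPolynomial (Fin d) ℂ))
    (hI : I = {f | ∀ j : ℕ, 0 < j → eval (fun t => w t ^ j) f = 0})
    (f : MvPolynomial (Fin d) ℂ) (hf : f ∈ I) (hf0 : f ≠ 0)
    (hmin : ∀ g ∈ I, g ≠ 0 → ¬ g.support ⊂ f.support) :
    (∃ (c : ℂ) (m : Fin d →₀ ℕ), f = C c * monomial m 1) ∨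
    (∃ (c : ℂ) (m₁ m₂ : Fin d →₀ ℕ), m₁ ≠ m₂ ∧
      f = C c * (monomial m₁ 1 - monomial m₂ 1)) := by
  subst hI
  simp only [Set.mem_setOf_eq] at hf hmin
  set Λ : (Fin d →₀ ℕ) → ℂ := fun m => ∏ i, w i ^ m i with hΛdef
  have heval : ∀ (g : MvPolynomial (Fin d) ℂ) (j : ℕ),
      eval (fun t => w t ^ j) g = ∑ m ∈ g.support, coeff m g * Λ m ^ j := by
    intro g j
    rw [eval_eq']
    apply Finset.sum_congr rfl
    intro m _
    congr 1
    rw [hΛdef, ← Finset.prod_pow]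
    apply Finset.prod_congr rfl
    intro i _
    rw [← pow_mul, ← pow_mul, Nat.mul_comm]
  have hmono : ∀ (m : Fin d →₀ ℕ) (c : ℂ) (j : ℕ),
      eval (fun t => w t ^ j) (monomial m c) = c * Λ m ^ j := by
    intro m c j
    rcases eq_or_ne c 0 with rfl | hc
    · simp
    · rw [heval, support_monomial, if_neg hc, Finset.sum_singleton, coeff_monomial, if_pos rfl]
  obtain ⟨m₀, hm₀⟩ := (MvPolynomial.support_nonempty (p := f)).mpr hf0
  set v₀ : ℂ := Λ m₀ with hv₀def
  set S : ℂ → ℂ := fun v => ∑ m ∈ f.support.filter (fun m => Λ m = v), coeff m f with hSdef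
  -- fiberwise sums vanish for nonzero values
  have hSzero : ∀ v ∈ f.support.image Λ, v ≠ 0 → S v = 0 := by
    apply class_sum_zero
    intro j hj
    have hpart : ∑ v ∈ f.support.image Λ,
        ∑ m ∈ f.support.filter (fun m => Λ m = v), coeff m f * Λ m ^ j
        = ∑ m ∈ f.support, coeff m f * Λ m ^ j :=
      Finset.sum_fiberwise_of_maps_to (fun m hm => Finset.mem_image_of_mem Λ hm) _
    have : ∀ v ∈ f.support.image Λ,
        (∑ m ∈ f.support.filter (fun m => Λ m = v), coeff m f * Λ m ^ j) = S v * v ^ j := by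
      intro v _
      rw [hSdef, Finset.sum_mul]
      apply Finset.sum_congr rfl
      intro m hm
      rw [(Finset.mem_filter.mp hm).2]
    rw [← Finset.sum_congr rfl this, hpart, ← heval]
    exact hf j hj
  -- the fiber polynomial of v₀
  set T : Finset (Fin d →₀ ℕ) := f.support.filter (fun m => Λ m = v₀) with hTdef
  set g : MvPolynomial (Fin d) ℂ := ∑ m ∈ T, monomial m (coeff m f) with hgdef
  have hm₀T : m₀ ∈ T := Finset.mem_filter.mpr ⟨hm₀, rfl⟩
  have hgcoeff : ∀ m', coeff m' g = if m' ∈ T then coeff m' f else 0 := by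
    intro m'
    rw [hgdef, MvPolynomial.coeff_sum]
    rw [Finset.sum_congr rfl (fun m _ => coeff_monomial m' m (coeff m f))]
    exact Finset.sum_ite_eq' T m' (fun m => coeff m f)
  have hgsupp : g.support = T := by
    ext m'
    rw [mem_support_iff, hgcoeff]
    constructor
    · intro h
      by_contra hmem
      simp [hmem] at h
    · intro h
      rw [if_pos h]
      exact mem_support_iff.mp (Finset.mem_filter.mp h).1
  have hgeval : ∀ j : ℕ, eval (fun t => w t ^ j) g = S v₀ * v₀ ^ j := by
    intro j
    rw [heval, hgsupp, hSdef, Finset.sum_mul]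
    apply Finset.sum_congr rfl
    intro m hm
    rw [hgcoeff, if_pos hm, (Finset.mem_filter.mp hm).2]
  have hgI : ∀ j : ℕ, 0 < j → eval (fun t => w t ^ j) g = 0 := by
    intro j hj
    rw [hgeval]
    rcases eq_or_ne v₀ 0 with h0 | h0
    · rw [h0, zero_pow hj.ne', mul_zero]
    · rw [hSzero v₀ (Finset.mem_image_of_mem Λ hm₀) h0, zero_mul]
  have hg0 : g ≠ 0 := by
    intro h
    have := hgcoeff m₀
    rw [h, if_pos hm₀T] at this
    exact mem_support_iff.mp hm₀ (by simpa using this.symm)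
  have hTeq : T = f.support := by
    have hsub : T ⊆ f.support := Finset.filter_subset _ _
    rcases hsub.eq_or_ssubset with h | h
    · exact h
    · exact absurd (hgsupp ▸ h) (hmin g hgI hg0)
  have hΛconst : ∀ m ∈ f.support, Λ m = v₀ := by
    intro m hm
    exact (Finset.mem_filter.mp (hTeq ▸ hm : m ∈ T)).2
  rcases eq_or_ne v₀ 0 with h0 | h0
  · -- monomial case
    left
    set c := coeff m₀ f with hcdef
    have hc : c ≠ 0 := mem_support_iff.mp hm₀
    have hhI : ∀ j : ℕ, 0 < j → eval (fun t => w t ^ j) (monomial m₀ c) = 0 := by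
      intro j hj
      rw [hmono, ← hv₀def, h0, zero_pow hj.ne', mul_zero]
    have hh0 : (monomial m₀ c : MvPolynomial (Fin d) ℂ) ≠ 0 := by
      simpa [monomial_eq_zero] using hc
    have hhsupp : (monomial m₀ c : MvPolynomial (Fin d) ℂ).support = {m₀} := by
      rw [support_monomial, if_neg hc]
    have hsub : (monomial m₀ c : MvPolynomial (Fin d) ℂ).support ⊆ f.support := by
      rw [hhsupp]; exact Finset.singleton_subset_iff.mpr hm₀
    have hsupp : f.support = {m₀} := by
      rcases hsub.eq_or_ssubset with h | h
      · rw [← h, hhsupp]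
      · exact absurd h (hmin _ hhI hh0)
    refine ⟨c, m₀, ?_⟩
    rw [C_mul_monomial, mul_one]
    conv_lhs => rw [f.as_sum, hsupp, Finset.sum_singleton]
  · -- binomial case
    right
    have hSv₀ : S v₀ = 0 := hSzero v₀ (Finset.mem_image_of_mem Λ hm₀) h0
    have hsum0 : ∑ m ∈ f.support, coeff m f = 0 := by
      have h2 : ∑ m ∈ T, coeff m f = 0 := hSv₀
      rwa [hTeq] at h2
    set c := coeff m₀ f with hcdef
    have hc : c ≠ 0 := mem_support_iff.mp hm₀
    have hex : ∃ m₁ ∈ f.support, m₁ ≠ m₀ := by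
      by_contra hcon
      push_neg at hcon
      have : f.support = {m₀} :=
        Finset.Subset.antisymm (fun m hm => Finset.mem_singleton.mpr (hcon m hm))
          (Finset.singleton_subset_iff.mpr hm₀)
      rw [this, Finset.sum_singleton] at hsum0
      exact hc hsum0
    obtain ⟨m₁, hm₁, hne⟩ := hex
    set h : MvPolynomial (Fin d) ℂ := monomial m₀ c - monomial m₁ c with hhdef
    have hhI : ∀ j : ℕ, 0 < j → eval (fun t => w t ^ j) h = 0 := by
      intro j hj
      rw [hhdef, map_sub, hmono, hmono, hΛconst m₁ hm₁, ← hv₀def, sub_self]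
    have hh0 : h ≠ 0 := by
      intro hz
      have : coeff m₀ h = 0 := by rw [hz]; simp
      rw [hhdef, coeff_sub, coeff_monomial, coeff_monomial, if_pos rfl,
        if_neg hne, sub_zero] at this
      exact hc this
    have hhsub : h.support ⊆ {m₀, m₁} := by
      refine (support_sub _ _ _).trans ?_
      apply Finset.union_subset
      · exact (support_monomial_subset).trans (by simp)
      · exact (support_monomial_subset).trans (by simp)
    have hsub2 : ({m₀, m₁} : Finset (Fin d →₀ ℕ)) ⊆ f.support := by
      intro m hm
      rcases Finset.mem_insert.mp hm with rfl | hm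
      · exact hm₀
      · exact (Finset.mem_singleton.mp hm) ▸ hm₁
    have hsuppf : f.support = {m₀, m₁} := by
      have hsub : h.support ⊆ f.support := hhsub.trans hsub2
      rcases hsub.eq_or_ssubset with heq | hss
      · exact Finset.Subset.antisymm (heq ▸ hhsub) hsub2
      · exact absurd hss (hmin h hhI hh0)
    have hm₀m₁ : m₀ ≠ m₁ := fun h => hne h.symm
    have hcc : c + coeff m₁ f = 0 := by
      rw [hsuppf, Finset.sum_pair hm₀m₁] at hsum0
      exact hsum0
    refine ⟨c, m₀, m₁, hm₀m₁, ?_⟩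
    have hfexp : f = monomial m₀ c + monomial m₁ (coeff m₁ f) := by
      conv_lhs => rw [f.as_sum, hsuppf, Finset.sum_pair hm₀m₁]
    have hneg : coeff m₁ f = -c := eq_neg_of_add_eq_zero_right hcc
    rw [hfexp, hneg, map_neg, mul_sub, C_mul_monomial, C_mul_monomial, mul_one,
      sub_eq_add_neg]
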